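/- For all integers k ≥ r ≥ 2 and real x ∈ [0,1], g_k^r(x) ≤ g_r^r(x). -/
import Mathlib


/-- `g_k^r(x) = ∑_{i=0}^{r-1} C(k,i) x^{k-i-1} (1-x)^i`. -/
noncomputable def gfun (k r : ℕ) (x : ℝ) : ℝ :=
  ∑ i ∈ Finset.range r, (k.choose i : ℝ) * x ^ (k - i - 1) * (1 - x) ^ i

lemma gfun_step (k s : ℕ) (hks : s + 1 ≤ k) (x : ℝ) :
    gfun (k+1) (s+1) x = gfun k (s+1) x
      - (k.choose s : ℝ) * x ^ (k - s - 1) * (1 - x) ^ (s + 1) := by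
  set T : ℕ → ℝ := fun i => (k.choose i : ℝ) * x ^ (k - i - 1) * (1 - x) ^ (i + 1) with hT
  have h1 : ∑ i ∈ Finset.range (s+1), T i = (∑ i ∈ Finset.range s, T (i+1)) + T 0 :=
    Finset.sum_range_succ' T s
  have h2 : ∑ i ∈ Finset.range (s+1), T i = (∑ i ∈ Finset.range s, T i) + T s :=
    Finset.sum_range_succ T s
  have hTs : (k.choose s : ℝ) * x ^ (k - s - 1) * (1 - x) ^ (s + 1)
      = (∑ i ∈ Finset.range s, T (i+1)) + T 0 - ∑ i ∈ Finset.range s, T i := by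
    have : T s = (∑ i ∈ Finset.range s, T (i+1)) + T 0 - ∑ i ∈ Finset.range s, T i := by
      rw [← h1, h2]; ring
    simpa [hT] using this
  rw [hTs]
  unfold gfun
  rw [Finset.sum_range_succ' _ s, Finset.sum_range_succ'
      (fun i => (k.choose i : ℝ) * x ^ (k - i - 1) * (1 - x) ^ i) s]
  have hsum : ∀ i ∈ Finset.range s,
      ((k+1).choose (i+1) : ℝ) * x ^ (k + 1 - (i+1) - 1) * (1 - x) ^ (i+1)
      = (k.choose (i+1) : ℝ) * x ^ (k - (i+1) - 1) * (1 - x) ^ (i+1) - T (i+1) + T i := by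
    intro i hi
    rw [Finset.mem_range] at hi
    have hik : i + 2 ≤ k := by omega
    have e1 : k + 1 - (i+1) - 1 = k - i - 1 := by omega
    have e2 : k - (i+1) - 1 = k - i - 2 := by omega
    have e3 : k - i - 1 = (k - i - 2) + 1 := by omega
    have e4 : k - (i+1) - 1 = k - i - 2 := by omega
    have hpascal : ((k+1).choose (i+1) : ℝ) = (k.choose i : ℝ) + (k.choose (i+1) : ℝ) := by
      rw [Nat.choose_succ_succ]; push_cast; ring
    rw [e1, e2, hpascal, hT]
    simp only [e4, e3]
    ring
  rw [Finset.sum_congr rfl hsum]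
  have hconst : ((k+1).choose 0 : ℝ) * x ^ (k + 1 - 0 - 1) * (1 - x) ^ 0
      = (k.choose 0 : ℝ) * x ^ (k - 0 - 1) * (1 - x) ^ 0 - T 0 := by
    have e5 : k - 0 - 1 = k - 1 := by omega
    have e6 : k + 1 - 0 - 1 = (k - 1) + 1 := by omega
    rw [hT]
    simp only [Nat.choose_zero_right, e5, e6]
    push_cast
    ring
  rw [Finset.sum_add_distrib, Finset.sum_sub_distrib, hconst]
  ring

/-- For all integers `k ≥ r ≥ 2` and real `x ∈ [0,1]`, `g_k^r(x) ≤ g_r^r(x)`. -/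
theorem stmt_2 (r k : ℕ) (hr : 2 ≤ r) (hk : r ≤ k) (x : ℝ)
    (hx : x ∈ Set.Icc (0:ℝ) 1) :
    gfun k r x ≤ gfun r r x := by
  obtain ⟨hx0, hx1⟩ := hx
  induction k, hk using Nat.le_induction with
  | base => exact le_rfl
  | succ k hk ih =>
    obtain ⟨s, rfl⟩ : ∃ s, r = s + 1 := ⟨r - 1, by omega⟩
    rw [gfun_step k s (by omega) x]
    have hnn : 0 ≤ (k.choose s : ℝ) * x ^ (k - s - 1) * (1 - x) ^ (s + 1) := by
      apply mul_nonneg (mul_nonneg (by positivity) (pow_nonneg hx0 _)) (pow_nonneg (by linarith) _)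
    linarith
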